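/- Let Γ(ρ) be the positive fixed point of Γ = 1/(ρ + βω_c/(1+ω_cΓ) + βω_d/(1+ω_dΓ)), and define Ψ(ρ) = βω_d/(1+ω_dΓ(ρ))² + βω_c/(1+ω_cΓ(ρ))². Then dΨ/dρ = −2β·(dΓ/dρ)·(ω_d²/(1+ω_dΓ)³ + ω_c²/(1+ω_cΓ)³) > 0, i.e. Ψ is strictly increasing in ρ. -/

import Mathlib

/-- helper: `x / (1 + ω x)` is strictly increasing on positives. -/
lemma cbf_div_mono {ω x y : ℝ} (hω : 0 < ω) (hx : 0 < x) (hxy : x < y) :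
    x / (1 + ω * x) < y / (1 + ω * y) := by
  have h1 : 0 < 1 + ω * x := by positivity
  have h2 : 0 < 1 + ω * y := by nlinarith
  rw [div_lt_div_iff₀ h1 h2]
  nlinarith

set_option maxHeartbeats 1000000 in
theorem cbf_psi_increasing (β ωd ωc : ℝ) (hβ : 0 < β) (hωd : 0 < ωd) (hωc : 0 < ωc)
    (Γ : ℝ → ℝ)
    (hΓ : ∀ ρ : ℝ, 0 < ρ → 0 < Γ ρ ∧
      Γ ρ = 1 / (ρ + β * ωc / (1 + ωc * Γ ρ) + β * ωd / (1 + ωd * Γ ρ))) :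
    (∀ ρ : ℝ, 0 < ρ →
      deriv (fun t : ℝ => β * ωd / (1 + ωd * Γ t) ^ 2 + β * ωc / (1 + ωc * Γ t) ^ 2) ρ =
        -2 * β * deriv Γ ρ *
          (ωd ^ 2 / (1 + ωd * Γ ρ) ^ 3 + ωc ^ 2 / (1 + ωc * Γ ρ) ^ 3) ∧
      0 < deriv (fun t : ℝ => β * ωd / (1 + ωd * Γ t) ^ 2 + β * ωc / (1 + ωc * Γ t) ^ 2) ρ) ∧
    StrictMonoOn (fun t : ℝ => β * ωd / (1 + ωd * Γ t) ^ 2 + β * ωc / (1 + ωc * Γ t) ^ 2)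
      (Set.Ioi 0) := by
  classical
  set f : ℝ → ℝ := fun γ => γ⁻¹ - β * ωc * (1 + ωc * γ)⁻¹ - β * ωd * (1 + ωd * γ)⁻¹ with hfdef
  -- the fixed point equation, in "f" form
  have hfix : ∀ ρ : ℝ, 0 < ρ → f (Γ ρ) = ρ := by
    intro ρ hρ
    obtain ⟨hpos, heq⟩ := hΓ ρ hρ
    have h1 : 0 < 1 + ωc * Γ ρ := by positivity
    have h2 : 0 < 1 + ωd * Γ ρ := by positivity
    have hD : 0 < ρ + β * ωc / (1 + ωc * Γ ρ) + β * ωd / (1 + ωd * Γ ρ) := by positivity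
    have hinv : (Γ ρ)⁻¹ = ρ + β * ωc / (1 + ωc * Γ ρ) + β * ωd / (1 + ωd * Γ ρ) := by
      conv_lhs => rw [heq]
      rw [one_div, inv_inv]
    simp only [hfdef]
    rw [hinv]
    field_simp
    ring
  -- product form of f
  have hmul : ∀ x : ℝ, 0 < x →
      f x * x = 1 - β * ωc * x / (1 + ωc * x) - β * ωd * x / (1 + ωd * x) := by
    intro x hx
    have h1 : 0 < 1 + ωc * x := by positivity
    have h2 : 0 < 1 + ωd * x := by positivity
    simp only [hfdef]
    field_simp
  -- expanded fixed point identity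
  have hone : ∀ ρ : ℝ, 0 < ρ →
      ρ * Γ ρ + β * ωc * Γ ρ / (1 + ωc * Γ ρ) + β * ωd * Γ ρ / (1 + ωd * Γ ρ) = 1 := by
    intro ρ hρ
    have h := hmul (Γ ρ) (hΓ ρ hρ).1
    rw [hfix ρ hρ] at h
    linarith [h]
  -- comparison lemmas
  have hcomp_lt : ∀ ρ : ℝ, 0 < ρ → ∀ x : ℝ, 0 < x → x < Γ ρ → ρ < f x := by
    intro ρ hρ x hx hxΓ
    have hγ : 0 < Γ ρ := (hΓ ρ hρ).1
    have k1 : x / (1 + ωc * x) < Γ ρ / (1 + ωc * Γ ρ) := cbf_div_mono hωc hx hxΓ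
    have k2 : x / (1 + ωd * x) < Γ ρ / (1 + ωd * Γ ρ) := cbf_div_mono hωd hx hxΓ
    have h := hmul x hx
    have h1 := hone ρ hρ
    have e1 : β * ωc * x / (1 + ωc * x) = β * ωc * (x / (1 + ωc * x)) := by ring
    have e2 : β * ωd * x / (1 + ωd * x) = β * ωd * (x / (1 + ωd * x)) := by ring
    have e3 : β * ωc * Γ ρ / (1 + ωc * Γ ρ) = β * ωc * (Γ ρ / (1 + ωc * Γ ρ)) := by ring
    have e4 : β * ωd * Γ ρ / (1 + ωd * Γ ρ) = β * ωd * (Γ ρ / (1 + ωd * Γ ρ)) := by ring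
    have hbc : 0 < β * ωc := by positivity
    have hbd : 0 < β * ωd := by positivity
    have hρx : ρ * x < ρ * Γ ρ := by nlinarith
    have : ρ * x < f x * x := by
      rw [h, e1, e2]
      rw [e3, e4] at h1
      nlinarith [mul_lt_mul_of_pos_left k1 hbc, mul_lt_mul_of_pos_left k2 hbd]
    exact lt_of_mul_lt_mul_right (by linarith [this]) hx.le
  have hcomp_gt : ∀ ρ : ℝ, 0 < ρ → ∀ x : ℝ, Γ ρ < x → f x < ρ := by
    intro ρ hρ x hxΓ
    have hγ : 0 < Γ ρ := (hΓ ρ hρ).1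
    have hx : 0 < x := lt_trans hγ hxΓ
    have k1 : Γ ρ / (1 + ωc * Γ ρ) < x / (1 + ωc * x) := cbf_div_mono hωc hγ hxΓ
    have k2 : Γ ρ / (1 + ωd * Γ ρ) < x / (1 + ωd * x) := cbf_div_mono hωd hγ hxΓ
    have h := hmul x hx
    have h1 := hone ρ hρ
    have e1 : β * ωc * x / (1 + ωc * x) = β * ωc * (x / (1 + ωc * x)) := by ring
    have e2 : β * ωd * x / (1 + ωd * x) = β * ωd * (x / (1 + ωd * x)) := by ring
    have e3 : β * ωc * Γ ρ / (1 + ωc * Γ ρ) = β * ωc * (Γ ρ / (1 + ωc * Γ ρ)) := by ring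
    have e4 : β * ωd * Γ ρ / (1 + ωd * Γ ρ) = β * ωd * (Γ ρ / (1 + ωd * Γ ρ)) := by ring
    have hbc : 0 < β * ωc := by positivity
    have hbd : 0 < β * ωd := by positivity
    have hρx : ρ * Γ ρ < ρ * x := by nlinarith
    have : f x * x < ρ * x := by
      rw [h, e1, e2]
      rw [e3, e4] at h1
      nlinarith [mul_lt_mul_of_pos_left k1 hbc, mul_lt_mul_of_pos_left k2 hbd]
    exact lt_of_mul_lt_mul_right (by linarith [this]) hx.le
  -- continuity of Γ on positives
  have hcont : ∀ ρ0 : ℝ, 0 < ρ0 → ContinuousAt Γ ρ0 := by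
    intro ρ0 hρ0
    rw [Metric.continuousAt_iff]
    intro ε hε
    have hγ0 : 0 < Γ ρ0 := (hΓ ρ0 hρ0).1
    set γ0 := Γ ρ0 with hγ0def
    set ε' := min ε (γ0 / 2) with hε'def
    have hε' : 0 < ε' := lt_min hε (by linarith)
    have hε'le : ε' ≤ ε := min_le_left _ _
    have hε'γ : ε' ≤ γ0 / 2 := min_le_right _ _
    have hx1 : 0 < γ0 - ε' := by linarith
    have h1 : ρ0 < f (γ0 - ε') := hcomp_lt ρ0 hρ0 _ hx1 (by linarith)
    have h2 : f (γ0 + ε') < ρ0 := hcomp_gt ρ0 hρ0 _ (by linarith)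
    refine ⟨min (min (f (γ0 - ε') - ρ0) (ρ0 - f (γ0 + ε'))) ρ0,
      lt_min (lt_min (by linarith) (by linarith)) hρ0, ?_⟩
    intro ρ hdist
    rw [Real.dist_eq] at hdist
    rw [Real.dist_eq]
    have habs := abs_lt.1 hdist
    have hδ1 : min (min (f (γ0 - ε') - ρ0) (ρ0 - f (γ0 + ε'))) ρ0 ≤ f (γ0 - ε') - ρ0 :=
      le_trans (min_le_left _ _) (min_le_left _ _)
    have hδ2 : min (min (f (γ0 - ε') - ρ0) (ρ0 - f (γ0 + ε'))) ρ0 ≤ ρ0 - f (γ0 + ε') :=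
      le_trans (min_le_left _ _) (min_le_right _ _)
    have hδ3 : min (min (f (γ0 - ε') - ρ0) (ρ0 - f (γ0 + ε'))) ρ0 ≤ ρ0 := min_le_right _ _
    have hρ : 0 < ρ := by cases habs with | intro a b => linarith
    have hA : f (γ0 + ε') < ρ := by cases habs with | intro a b => linarith
    have hB : ρ < f (γ0 - ε') := by cases habs with | intro a b => linarith
    have hup : Γ ρ < γ0 + ε' := by
      by_contra hcon
      push_neg at hcon
      rcases eq_or_lt_of_le hcon with heq | hlt
      · have hfx := hfix ρ hρ
        rw [← heq] at hfx
        linarith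
      · have := hcomp_lt ρ hρ (γ0 + ε') (by linarith) hlt
        linarith
    have hdown : γ0 - ε' < Γ ρ := by
      by_contra hcon
      push_neg at hcon
      rcases eq_or_lt_of_le hcon with heq | hlt
      · have hfx := hfix ρ hρ
        rw [heq] at hfx
        linarith
      · have := hcomp_gt ρ hρ (γ0 - ε') hlt
        linarith
    rw [abs_lt]
    constructor <;> [linarith; linarith]
  -- derivative of f
  have hfderiv : ∀ γ : ℝ, 0 < γ → HasDerivAt f
      (-(γ ^ 2)⁻¹ + β * ωc ^ 2 / (1 + ωc * γ) ^ 2 + β * ωd ^ 2 / (1 + ωd * γ) ^ 2) γ := by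
    intro γ hγ
    have h1 : 0 < 1 + ωc * γ := by positivity
    have h2 : 0 < 1 + ωd * γ := by positivity
    have d0 : HasDerivAt (fun x : ℝ => x⁻¹) (-(γ ^ 2)⁻¹) γ := hasDerivAt_inv (ne_of_gt hγ)
    have dc0 : HasDerivAt (fun x : ℝ => 1 + ωc * x) ωc γ := by
      simpa using ((hasDerivAt_id γ).const_mul ωc).const_add 1
    have dd0 : HasDerivAt (fun x : ℝ => 1 + ωd * x) ωd γ := by
      simpa using ((hasDerivAt_id γ).const_mul ωd).const_add 1
    have dc : HasDerivAt (fun x : ℝ => β * ωc * (1 + ωc * x)⁻¹)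
        (β * ωc * (-ωc / (1 + ωc * γ) ^ 2)) γ := (dc0.inv (ne_of_gt h1)).const_mul (β * ωc)
    have dd : HasDerivAt (fun x : ℝ => β * ωd * (1 + ωd * x)⁻¹)
        (β * ωd * (-ωd / (1 + ωd * γ) ^ 2)) γ := (dd0.inv (ne_of_gt h2)).const_mul (β * ωd)
    have h := (d0.sub dc).sub dd
    have E : -(γ ^ 2)⁻¹ + β * ωc ^ 2 / (1 + ωc * γ) ^ 2 + β * ωd ^ 2 / (1 + ωd * γ) ^ 2 =
        -(γ ^ 2)⁻¹ - β * ωc * (-ωc / (1 + ωc * γ) ^ 2) - β * ωd * (-ωd / (1 + ωd * γ) ^ 2) := by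
      field_simp
      ring
    rw [E]
    exact h
  -- f' is negative at the fixed point
  have hf'neg : ∀ ρ : ℝ, 0 < ρ →
      -((Γ ρ) ^ 2)⁻¹ + β * ωc ^ 2 / (1 + ωc * Γ ρ) ^ 2 + β * ωd ^ 2 / (1 + ωd * Γ ρ) ^ 2 < 0 := by
    intro ρ hρ
    have hγ : 0 < Γ ρ := (hΓ ρ hρ).1
    set γ := Γ ρ with hγdef
    have h1 : 0 < 1 + ωc * γ := by positivity
    have h2 : 0 < 1 + ωd * γ := by positivity
    set u := ωc * γ / (1 + ωc * γ) with hudef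
    set v := ωd * γ / (1 + ωd * γ) with hvdef
    have hu0 : 0 < u := by positivity
    have hv0 : 0 < v := by positivity
    have hu1 : u < 1 := (div_lt_one h1).mpr (by linarith)
    have hv1 : v < 1 := (div_lt_one h2).mpr (by linarith)
    have honeu : ρ * γ + β * u + β * v = 1 := by
      have h0 := hone ρ hρ
      have e3 : β * u = β * ωc * γ / (1 + ωc * γ) := by rw [hudef]; ring
      have e4 : β * v = β * ωd * γ / (1 + ωd * γ) := by rw [hvdef]; ring
      linarith
    have ec : β * ωc ^ 2 / (1 + ωc * γ) ^ 2 = β * u ^ 2 * (γ ^ 2)⁻¹ := by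
      rw [hudef]; field_simp
    have ed : β * ωd ^ 2 / (1 + ωd * γ) ^ 2 = β * v ^ 2 * (γ ^ 2)⁻¹ := by
      rw [hvdef]; field_simp
    rw [ec, ed]
    have hsum : β * u ^ 2 + β * v ^ 2 < 1 := by
      nlinarith [mul_pos (mul_pos hβ hu0) (sub_pos.2 hu1),
        mul_pos (mul_pos hβ hv0) (sub_pos.2 hv1), mul_pos hρ hγ]
    have hγ2 : 0 < (γ ^ 2)⁻¹ := by positivity
    nlinarith [mul_lt_mul_of_pos_right hsum hγ2]
  -- derivative of Γ
  have hΓhas : ∀ ρ : ℝ, 0 < ρ → HasDerivAt Γ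
      (-((Γ ρ) ^ 2)⁻¹ + β * ωc ^ 2 / (1 + ωc * Γ ρ) ^ 2 + β * ωd ^ 2 / (1 + ωd * Γ ρ) ^ 2)⁻¹ ρ := by
    intro ρ hρ
    refine HasDerivAt.of_local_left_inverse (hcont ρ hρ) (hfderiv _ (hΓ ρ hρ).1)
      (ne_of_lt (hf'neg ρ hρ)) ?_
    filter_upwards [isOpen_Ioi.mem_nhds (Set.mem_Ioi.mpr hρ)] with x hx
    exact hfix x hx
  have hΓ'neg : ∀ ρ : ℝ, 0 < ρ → deriv Γ ρ < 0 := by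
    intro ρ hρ
    rw [(hΓhas ρ hρ).deriv]
    exact inv_lt_zero.mpr (hf'neg ρ hρ)
  -- derivative of Ψ
  have hΨhas : ∀ ρ : ℝ, 0 < ρ →
      HasDerivAt (fun t : ℝ => β * ωd / (1 + ωd * Γ t) ^ 2 + β * ωc / (1 + ωc * Γ t) ^ 2)
        (-2 * β * deriv Γ ρ * (ωd ^ 2 / (1 + ωd * Γ ρ) ^ 3 + ωc ^ 2 / (1 + ωc * Γ ρ) ^ 3)) ρ := by
    intro ρ hρ
    have hγ : 0 < Γ ρ := (hΓ ρ hρ).1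
    have h1 : 0 < 1 + ωc * Γ ρ := by positivity
    have h2 : 0 < 1 + ωd * Γ ρ := by positivity
    have hΓ' : HasDerivAt Γ (deriv Γ ρ) ρ := by
      have := hΓhas ρ hρ
      rwa [this.deriv]
    have dd0 : HasDerivAt (fun t : ℝ => 1 + ωd * Γ t) (ωd * deriv Γ ρ) ρ :=
      (hΓ'.const_mul ωd).const_add 1
    have dc0 : HasDerivAt (fun t : ℝ => 1 + ωc * Γ t) (ωc * deriv Γ ρ) ρ :=
      (hΓ'.const_mul ωc).const_add 1
    have dd1 : HasDerivAt (fun t : ℝ => (1 + ωd * Γ t) ^ 2)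
        (2 * (1 + ωd * Γ ρ) ^ 1 * (ωd * deriv Γ ρ)) ρ := by
      simpa using dd0.fun_pow 2
    have dc1 : HasDerivAt (fun t : ℝ => (1 + ωc * Γ t) ^ 2)
        (2 * (1 + ωc * Γ ρ) ^ 1 * (ωc * deriv Γ ρ)) ρ := by
      simpa using dc0.fun_pow 2
    have dd2 : HasDerivAt (fun t : ℝ => β * ωd / (1 + ωd * Γ t) ^ 2)
        ((0 * (1 + ωd * Γ ρ) ^ 2 - β * ωd * (2 * (1 + ωd * Γ ρ) ^ 1 * (ωd * deriv Γ ρ))) /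
          ((1 + ωd * Γ ρ) ^ 2) ^ 2) ρ :=
      (hasDerivAt_const ρ (β * ωd)).div dd1 (by positivity)
    have dc2 : HasDerivAt (fun t : ℝ => β * ωc / (1 + ωc * Γ t) ^ 2)
        ((0 * (1 + ωc * Γ ρ) ^ 2 - β * ωc * (2 * (1 + ωc * Γ ρ) ^ 1 * (ωc * deriv Γ ρ))) /
          ((1 + ωc * Γ ρ) ^ 2) ^ 2) ρ :=
      (hasDerivAt_const ρ (β * ωc)).div dc1 (by positivity)
    have h := dd2.add dc2
    have h1' : (1 + ωc * Γ ρ : ℝ) ≠ 0 := ne_of_gt h1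
    have h2' : (1 + ωd * Γ ρ : ℝ) ≠ 0 := ne_of_gt h2
    have E : -2 * β * deriv Γ ρ * (ωd ^ 2 / (1 + ωd * Γ ρ) ^ 3 + ωc ^ 2 / (1 + ωc * Γ ρ) ^ 3) =
        (0 * (1 + ωd * Γ ρ) ^ 2 - β * ωd * (2 * (1 + ωd * Γ ρ) ^ 1 * (ωd * deriv Γ ρ))) /
          ((1 + ωd * Γ ρ) ^ 2) ^ 2 +
        (0 * (1 + ωc * Γ ρ) ^ 2 - β * ωc * (2 * (1 + ωc * Γ ρ) ^ 1 * (ωc * deriv Γ ρ))) /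
          ((1 + ωc * Γ ρ) ^ 2) ^ 2 := by
      field_simp
      ring
    rw [E]
    exact h
  have hΨ'pos : ∀ ρ : ℝ, 0 < ρ →
      0 < deriv (fun t : ℝ => β * ωd / (1 + ωd * Γ t) ^ 2 + β * ωc / (1 + ωc * Γ t) ^ 2) ρ := by
    intro ρ hρ
    rw [(hΨhas ρ hρ).deriv]
    have hγ : 0 < Γ ρ := (hΓ ρ hρ).1
    have h1 : 0 < 1 + ωc * Γ ρ := by positivity
    have h2 : 0 < 1 + ωd * Γ ρ := by positivity
    have hS : 0 < ωd ^ 2 / (1 + ωd * Γ ρ) ^ 3 + ωc ^ 2 / (1 + ωc * Γ ρ) ^ 3 := by positivity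
    have hneg := hΓ'neg ρ hρ
    have : 0 < -2 * β * deriv Γ ρ := by nlinarith
    exact mul_pos this hS
  refine ⟨fun ρ hρ => ⟨(hΨhas ρ hρ).deriv, hΨ'pos ρ hρ⟩, ?_⟩
  refine strictMonoOn_of_deriv_pos (convex_Ioi 0) ?_ ?_
  · intro x hx
    exact ((hΨhas x hx).continuousAt).continuousWithinAt
  · intro x hx
    rw [interior_Ioi] at hx
    exact hΨ'pos x hx
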